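/- (Potts reduction) Given a Potts instance with labels L, data terms D_L ≥ 0 and smoothness S(x), construct the flat hierarchy (root S with all labels as leaf children), set D_S = 0, smoothness S_L = S at leaves and 0 at the root. Then a leaf labeling u is feasible and optimal for the Potts energy if and only if its extension (with u_S = 1) is feasible and optimal for the GHMF energy, and the two optimal energies are equal. -/

import Mathlib

open scoped Classical

/-- Potts reduction: with the flat hierarchy (root `none`, children `some L` all
leaves), data term `0` and smoothness `0` at the root, a leaf labeling is feasible
and optimal for the Potts energy iff its extension (with root value 1) is feasible
and optimal for the GHMF energy, and the two optimal energies are equal.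
`TVS : (Ω → ℝ) → ℝ` is the fixed (S-weighted) discrete total-variation term
`u ↦ Σ_x S(x)|∇u(x)|`, identical in both formulations. -/
theorem potts_reduction {Ω Labels : Type} [Fintype Ω] [Fintype Labels]
    (D : Labels → Ω → ℝ) (hD : ∀ L x, 0 ≤ D L x)
    (TVS : (Ω → ℝ) → ℝ) :
    let PottsSet : Set (Labels → Ω → ℝ) :=
      {v | (∀ L x, 0 ≤ v L x) ∧ ∀ x, ∑ L, v L x = 1}
    let GSet : Set (Option Labels → Ω → ℝ) :=
      {w | (∀ n x, 0 ≤ w n x) ∧ (∀ x, w none x = 1) ∧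
        ∀ x, w none x = ∑ L, w (some L) x}
    let EP : (Labels → Ω → ℝ) → ℝ :=
      fun v => ∑ L, ((∑ x, D L x * v L x) + TVS (v L))
    let EG : (Option Labels → Ω → ℝ) → ℝ :=
      fun w => ((∑ x, (0 : ℝ) * w none x) + 0) +
        ∑ L, ((∑ x, D L x * w (some L) x) + TVS (fun x => w (some L) x))
    let ext : (Labels → Ω → ℝ) → (Option Labels → Ω → ℝ) :=
      fun v o x => o.elim 1 (fun L => v L x)
    (∀ v, (v ∈ PottsSet ∧ ∀ w ∈ PottsSet, EP v ≤ EP w) ↔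
      (ext v ∈ GSet ∧ ∀ w ∈ GSet, EG (ext v) ≤ EG w)) ∧
    sInf (EP '' PottsSet) = sInf (EG '' GSet) := by
  intro PottsSet GSet EP EG ext
  -- EG equals EP of the restriction
  have hEG : ∀ w : Option Labels → Ω → ℝ, EG w = EP (fun L x => w (some L) x) := by
    intro w
    simp [EG, EP]
  -- ext membership
  have hmem : ∀ v, v ∈ PottsSet ↔ ext v ∈ GSet := by
    intro v
    constructor
    · rintro ⟨h1, h2⟩
      refine ⟨?_, fun x => rfl, fun x => (h2 x).symm⟩
      rintro (_ | L) x
      · exact zero_le_one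
      · exact h1 L x
    · rintro ⟨h1, h2, h3⟩
      refine ⟨fun L x => h1 (some L) x, fun x => ?_⟩
      have := h3 x
      exact this.symm
  have hres : ∀ w ∈ GSet, (fun L x => w (some L) x) ∈ PottsSet := by
    rintro w ⟨h1, h2, h3⟩
    exact ⟨fun L x => h1 (some L) x, fun x => by rw [← h3 x, h2 x]⟩
  have hEGext : ∀ v, EG (ext v) = EP v := by
    intro v; rw [hEG]; rfl
  constructor
  · intro v
    constructor
    · rintro ⟨hv, hopt⟩
      refine ⟨(hmem v).1 hv, fun w hw => ?_⟩
      rw [hEGext, hEG]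
      exact hopt _ (hres w hw)
    · rintro ⟨hv, hopt⟩
      refine ⟨(hmem v).2 hv, fun w hw => ?_⟩
      have := hopt (ext w) ((hmem w).1 hw)
      rwa [hEGext, hEGext] at this
  · congr 1
    ext r
    constructor
    · rintro ⟨v, hv, rfl⟩
      exact ⟨ext v, (hmem v).1 hv, (hEGext v)⟩
    · rintro ⟨w, hw, rfl⟩
      exact ⟨_, hres w hw, (hEG w).symm⟩
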